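/- Let K be a field of characteristic different from 2 and R = K[x,y]/(y² − x²(x+1)) the coordinate ring of the nodal cubic. Then the map sending x to z²−1 and y to z(z²−1) induces a ring isomorphism from R onto the subring K[z²−1, z(z²−1)] of K[z], and for every nonzero non-invertible ideal I of R, Fitt₁(I) equals the conductor K[z](z²−1) (viewed inside R), which is generated by the images of x and y. -/

import Mathlib

/-- The second Fitting ideal of a two-generated ideal, computed from the generating pair
`(a, b)`: the ideal generated by all coefficients involved in a relation
`r * a + s * b = 0`. -/
def relFittingIdeal {R : Type*} [CommRing R] (a b : R) : Ideal R :=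
  Ideal.span {r : R | (∃ s, r * a + s * b = 0) ∨ (∃ s, s * a + r * b = 0)}

/-- The coordinate ring `K[x,y]/(y² - x²(x+1))` of the nodal plane cubic. -/
def NodalCubicRing (K : Type) [Field K] : Type :=
  MvPolynomial (Fin 2) K ⧸
    Ideal.span {(MvPolynomial.X 1 : MvPolynomial (Fin 2) K) ^ 2 -
      MvPolynomial.X 0 ^ 2 * (MvPolynomial.X 0 + 1)}

noncomputable instance (K : Type) [Field K] : CommRing (NodalCubicRing K) := by
  unfold NodalCubicRing; infer_instance

noncomputable instance (K : Type) [Field K] : Algebra K (NodalCubicRing K) := by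
  unfold NodalCubicRing; infer_instance

/-- The image of `x` in the nodal cubic coordinate ring. -/
noncomputable def nodalX (K : Type) [Field K] : NodalCubicRing K :=
  Ideal.Quotient.mk _ (MvPolynomial.X 0)

/-- The image of `y` in the nodal cubic coordinate ring. -/
noncomputable def nodalY (K : Type) [Field K] : NodalCubicRing K :=
  Ideal.Quotient.mk _ (MvPolynomial.X 1)

open Polynomial

set_option maxHeartbeats 1000000
set_option synthInstance.maxHeartbeats 200000

variable (K : Type) [Field K]

/-- the relation polynomial -/
noncomputable abbrev nodalRel : MvPolynomial (Fin 2) K :=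
  MvPolynomial.X 1 ^ 2 - MvPolynomial.X 0 ^ 2 * (MvPolynomial.X 0 + 1)

noncomputable def nodalψ : MvPolynomial (Fin 2) K →ₐ[K] K[X] :=
  MvPolynomial.aeval ![X ^ 2 - 1, X * (X ^ 2 - 1)]

lemma nodalψ_rel : nodalψ K (nodalRel K) = 0 := by
  simp only [nodalψ, nodalRel, map_sub, map_mul, map_add, map_pow, MvPolynomial.aeval_X,
    map_one]
  show (![X ^ 2 - 1, X * (X ^ 2 - 1)] 1)^2 - _ = (0:K[X])
  simp only [Matrix.cons_val_one, Matrix.head_cons, Matrix.cons_val_zero]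
  ring

noncomputable def nodalφ : NodalCubicRing K →ₐ[K] K[X] :=
  Ideal.Quotient.liftₐ _ (nodalψ K) (by
    intro p hp
    rw [Ideal.mem_span_singleton] at hp
    obtain ⟨q, rfl⟩ := hp
    rw [map_mul]
    have := nodalψ_rel K
    rw [this, zero_mul])

lemma nodalφ_mk (p : MvPolynomial (Fin 2) K) :
    nodalφ K (Ideal.Quotient.mk _ p) = nodalψ K p := rfl

lemma nodalφ_x : nodalφ K (nodalX K) = X ^ 2 - 1 := by
  show nodalψ K (MvPolynomial.X 0) = _
  simp [nodalψ]

lemma nodalφ_y : nodalφ K (nodalY K) = X * (X ^ 2 - 1) := by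
  show nodalψ K (MvPolynomial.X 1) = _
  simp [nodalψ]

lemma nodal_rel_eq : (nodalY K) ^ 2 = (nodalX K) ^ 2 * (nodalX K + 1) := by
  have : (Ideal.Quotient.mk _ (nodalRel K) : NodalCubicRing K) = 0 := by
    rw [Ideal.Quotient.eq_zero_iff_mem]
    exact Ideal.subset_span rfl
  have h := this
  rw [nodalRel, map_sub, sub_eq_zero, map_mul, map_add, map_pow, map_pow, map_one] at h
  exact h

lemma nodal_rep (r : NodalCubicRing K) :
    ∃ P Q : K[X], r = aeval (nodalX K) P + aeval (nodalX K) Q * nodalY K := by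
  obtain ⟨p, rfl⟩ := Ideal.Quotient.mk_surjective r
  induction p using MvPolynomial.induction_on with
  | C a =>
    exact ⟨C a, 0, by rw [aeval_C, map_zero, zero_mul, add_zero]; rfl⟩
  | add p q hp hq =>
    obtain ⟨P1, Q1, h1⟩ := hp
    obtain ⟨P2, Q2, h2⟩ := hq
    refine ⟨P1 + P2, Q1 + Q2, ?_⟩
    rw [map_add, h1, h2, map_add, map_add]
    rw [add_mul]; exact add_add_add_comm _ _ _ _
  | mul_X p i hp =>
    obtain ⟨P, Q, h⟩ := hp
    have hmul : (Ideal.Quotient.mk _ (p * MvPolynomial.X i) : NodalCubicRing K)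
        = Ideal.Quotient.mk _ p * Ideal.Quotient.mk _ (MvPolynomial.X i) := map_mul _ _ _
    fin_cases i
    · refine ⟨P * X, Q * X, ?_⟩
      rw [hmul, h]
      show _ * nodalX K = _
      rw [map_mul, map_mul, aeval_X]
      ring
    · refine ⟨Q * (X ^ 2 * (X + 1)), P, ?_⟩
      rw [hmul, h]
      show _ * nodalY K = _
      simp only [map_mul, map_pow, map_add, aeval_X, map_one]
      linear_combination (aeval (nodalX K)) Q * (nodal_rel_eq K)

lemma nodalφ_aeval (P : K[X]) :
    nodalφ K (aeval (nodalX K) P) = P.comp (X ^ 2 - 1) := by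
  rw [comp_eq_aeval, ← nodalφ_x K]
  exact (aeval_algHom_apply (nodalφ K) (nodalX K) P).symm

lemma X2_ne : (X ^ 2 - 1 : K[X]) ≠ C ((X ^ 2 - 1 : K[X]).coeff 0) := by
  intro h
  have h2at : ((X:K[X]) ^ 2 - 1).natDegree = 2 := by
    have : (X ^ 2 - 1 : K[X]) = X ^ 2 - C 1 := by rw [map_one]
    rw [this, natDegree_X_pow_sub_C]
  rw [h, natDegree_C] at h2at
  exact two_ne_zero h2at.symm

lemma nodalφ_inj (h2 : (2 : K) ≠ 0) : Function.Injective (nodalφ K) := by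
  rw [injective_iff_map_eq_zero]
  intro r hr
  obtain ⟨P, Q, rfl⟩ := nodal_rep K r
  rw [map_add, map_mul, nodalφ_aeval, nodalφ_aeval, nodalφ_y] at hr
  have hcomp1 : ((X : K[X]) ^ 2 - 1).comp (-X) = X ^ 2 - 1 := by
    simp only [sub_comp, pow_comp, X_comp, one_comp]
    ring
  have hcomp2 : ((X : K[X]) * (X ^ 2 - 1)).comp (-X) = -(X * (X ^ 2 - 1)) := by
    simp only [mul_comp, sub_comp, pow_comp, X_comp, one_comp]
    ring
  have hneg := congrArg (fun f : K[X] => f.comp (-X)) hr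
  simp only [add_comp, mul_comp, zero_comp] at hneg
  rw [comp_assoc, comp_assoc, hcomp1, X_comp] at hneg
  have h2X : (C (2:K) : K[X]) ≠ 0 := by
    exact C_ne_zero.mpr h2
  have hP : C (2:K) * P.comp (X ^ 2 - 1) = 0 := by
    have : (C (2:K) : K[X]) = 2 := by
      rw [show (2:K) = 1 + 1 by norm_num, map_add, map_one]; norm_num
    rw [this]; linear_combination hr + hneg
  have hPc : P.comp (X ^ 2 - 1) = 0 := by
    rcases mul_eq_zero.mp hP with h | h
    · exact absurd h h2X
    · exact h
  have hPzero : P = 0 := by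
    rcases (comp_eq_zero_iff).mp hPc with h | ⟨_, h⟩
    · exact h
    · exact absurd h (X2_ne K)
  have hQc : Q.comp (X ^ 2 - 1) * (X * (X ^ 2 - 1)) = 0 := by
    rw [hPzero, zero_comp, zero_add] at hr; exact hr
  have hX3 : (X * (X ^ 2 - 1) : K[X]) ≠ 0 := by
    intro h
    have := congrArg (fun f : K[X] => f.coeff 3) h
    simp only [coeff_zero] at this
    rw [show (X * (X ^ 2 - 1) : K[X]) = X ^ 3 - X by ring] at this
    simp [coeff_sub, coeff_X_pow, coeff_X] at this
  have hQc0 : Q.comp (X ^ 2 - 1) = 0 := by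
    rcases mul_eq_zero.mp hQc with h | h
    · exact h
    · exact absurd h hX3
  have hQzero : Q = 0 := by
    rcases (comp_eq_zero_iff).mp hQc0 with h | ⟨_, h⟩
    · exact h
    · exact absurd h (X2_ne K)
  rw [hPzero, hQzero]
  simp

lemma nodal_adjoin_top : Algebra.adjoin K {nodalX K, nodalY K} = ⊤ := by
  rw [eq_top_iff]
  intro r _
  obtain ⟨P, Q, rfl⟩ := nodal_rep K r
  have hx : nodalX K ∈ Algebra.adjoin K {nodalX K, nodalY K} :=
    Algebra.subset_adjoin (Set.mem_insert _ _)
  have hy : nodalY K ∈ Algebra.adjoin K {nodalX K, nodalY K} :=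
    Algebra.subset_adjoin (Set.mem_insert_of_mem _ rfl)
  have hP : aeval (nodalX K) P ∈ Algebra.adjoin K {nodalX K, nodalY K} :=
    Algebra.adjoin_mono (Set.singleton_subset_iff.mpr (Set.mem_insert _ _))
      (Polynomial.aeval_mem_adjoin_singleton K (nodalX K))
  have hQ : aeval (nodalX K) Q ∈ Algebra.adjoin K {nodalX K, nodalY K} :=
    Algebra.adjoin_mono (Set.singleton_subset_iff.mpr (Set.mem_insert _ _))
      (Polynomial.aeval_mem_adjoin_singleton K (nodalX K))
  exact add_mem hP (mul_mem hQ hy)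

lemma nodalφ_range :
    (nodalφ K).range = Algebra.adjoin K {(X : K[X]) ^ 2 - 1, X * (X ^ 2 - 1)} := by
  rw [← Algebra.map_top (nodalφ K), ← nodal_adjoin_top K, AlgHom.map_adjoin,
    Set.image_pair, nodalφ_x, nodalφ_y]

lemma eval_eq_of_mem_range (f : K[X]) (hf : f ∈ (nodalφ K).range) :
    f.eval 1 = f.eval (-1) := by
  obtain ⟨r, hr⟩ := hf
  have hr' : nodalφ K r = f := hr
  obtain ⟨P, Q, rfl⟩ := nodal_rep K r
  rw [← hr', map_add, map_mul, nodalφ_aeval, nodalφ_aeval, nodalφ_y]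
  simp [eval_comp]

lemma X2_mem_range : (X : K[X]) ^ 2 - 1 ∈ (nodalφ K).range := ⟨nodalX K, nodalφ_x K⟩

lemma X3_mem_range : (X : K[X]) * (X ^ 2 - 1) ∈ (nodalφ K).range := ⟨nodalY K, nodalφ_y K⟩

lemma X2_monic : ((X : K[X]) ^ 2 - 1).Monic := by
  rw [show ((X : K[X]) ^ 2 - 1) = X ^ 2 - C 1 by rw [map_one]]
  exact monic_X_pow_sub_C 1 two_ne_zero

lemma X2_natDegree : ((X : K[X]) ^ 2 - 1).natDegree = 2 := by
  rw [show ((X : K[X]) ^ 2 - 1) = X ^ 2 - C 1 by rw [map_one]]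
  exact natDegree_X_pow_sub_C

lemma X3_monic : ((X : K[X]) * (X ^ 2 - 1)).Monic := monic_X.mul (X2_monic K)

lemma X3_natDegree : ((X : K[X]) * (X ^ 2 - 1)).natDegree = 3 := by
  rw [natDegree_mul X_ne_zero (X2_monic K).ne_zero, natDegree_X, X2_natDegree]

lemma mem_range_of_eval (h2 : (2 : K) ≠ 0) :
    ∀ (n : ℕ) (f : K[X]), f.natDegree ≤ n → f.eval 1 = f.eval (-1) →
      f ∈ (nodalφ K).range := by
  intro n
  induction n with
  | zero =>
    intro f hdeg _
    rw [Polynomial.eq_C_of_natDegree_le_zero hdeg]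
    exact ⟨algebraMap K _ (f.coeff 0), by
      show nodalφ K _ = _
      rw [AlgHom.commutes, algebraMap_eq]⟩
  | succ n ih =>
    intro f hdeg heval
    by_cases hle : f.natDegree ≤ n
    · exact ih f hle heval
    push_neg at hle
    have hdeg' : f.natDegree = n + 1 := le_antisymm hdeg hle
    have hfne : f ≠ 0 := fun h => by simp [h] at hdeg'
    rcases Nat.eq_zero_or_pos n with hn | hn
    · -- degree 1 : impossible
      exfalso
      subst hn
      have hrep := eq_X_add_C_of_natDegree_le_one (by omega : f.natDegree ≤ 1)
      have h1 := heval
      rw [hrep] at h1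
      simp only [eval_add, eval_mul, eval_C, eval_X, mul_one] at h1
      have hc1 : f.coeff 1 = 0 := by
        have : (2:K) * f.coeff 1 = 0 := by linear_combination h1
        rcases mul_eq_zero.mp this with h | h
        · exact absurd h h2
        · exact h
      have : f.leadingCoeff ≠ 0 := leadingCoeff_ne_zero.mpr hfne
      rw [leadingCoeff, hdeg'] at this
      exact this hc1
    · -- natDegree f = n+1 ≥ 2 : subtract a monic element of the subring
      obtain ⟨g, hgmem, hgmonic, hgdeg, hgev1, hgev2⟩ :
          ∃ g : K[X], g ∈ (nodalφ K).range ∧ g.Monic ∧ g.natDegree = n + 1 ∧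
            g.eval 1 = 0 ∧ g.eval (-1) = 0 := by
        rcases Nat.even_or_odd (n + 1) with he | ho
        · obtain ⟨k, hk⟩ := he
          have hkpos : k ≠ 0 := by omega
          refine ⟨(X ^ 2 - 1) ^ k, pow_mem (X2_mem_range K) k, ((X2_monic K).pow _),
            ?_, ?_, ?_⟩
          · rw [natDegree_pow, X2_natDegree]; omega
          · simp [zero_pow hkpos]
          · simp [zero_pow hkpos]
        · obtain ⟨k, hk⟩ := ho
          have hk' : k ≥ 1 := by omega
          refine ⟨(X * (X ^ 2 - 1)) * (X ^ 2 - 1) ^ (k - 1),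
            mul_mem (X3_mem_range K) (pow_mem (X2_mem_range K) _),
            (X3_monic K).mul ((X2_monic K).pow _), ?_, ?_, ?_⟩
          · rw [natDegree_mul (X3_monic K).ne_zero (((X2_monic K).pow _).ne_zero),
              X3_natDegree, natDegree_pow, X2_natDegree]
            omega
          · simp
          · simp
      set c := f.leadingCoeff with hc
      have hcne : c ≠ 0 := leadingCoeff_ne_zero.mpr hfne
      set f' := f - C c * g with hf'
      have hCgne : C c * g ≠ 0 := mul_ne_zero (C_ne_zero.mpr hcne) hgmonic.ne_zero
      have hdegCg : (C c * g).degree = f.degree := by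
        rw [degree_C_mul hcne, degree_eq_natDegree hgmonic.ne_zero,
          degree_eq_natDegree hfne, hgdeg, hdeg']
      have hlcCg : (C c * g).leadingCoeff = c := by
        rw [leadingCoeff_mul' (by rw [leadingCoeff_C, hgmonic.leadingCoeff, mul_one]; exact hcne),
          leadingCoeff_C, hgmonic.leadingCoeff, mul_one]
      have hCmem : (C c : K[X]) ∈ (nodalφ K).range :=
        ⟨algebraMap K _ c, by
          show nodalφ K _ = _
          rw [AlgHom.commutes, algebraMap_eq]⟩
      by_cases hf'0 : f' = 0
      · have hfeq : f = C c * g := by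
          have := sub_eq_zero.mp hf'0
          exact this
        rw [hfeq]
        exact mul_mem hCmem hgmem
      · have hdlt : f'.degree < f.degree :=
          degree_sub_lt hdegCg.symm hfne hlcCg.symm
        have hltn : f'.natDegree < f.natDegree := natDegree_lt_natDegree hf'0 hdlt
        have hnd : f'.natDegree ≤ n := by omega
        have hev : f'.eval 1 = f'.eval (-1) := by
          rw [hf']
          simp only [eval_sub, eval_mul, hgev1, hgev2, heval, mul_zero, sub_zero]
        have hmem' := ih f' hnd hev
        have hfeq : f = f' + C c * g := by rw [hf']; ring
        rw [hfeq]
        exact add_mem hmem' (mul_mem hCmem hgmem)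

lemma even_odd_decomp (h2 : (2 : K) ≠ 0) (f : K[X]) :
    ∃ g₁ g₂ : K[X], g₁.eval 1 = g₁.eval (-1) ∧ g₂.eval 1 = g₂.eval (-1) ∧
      (X ^ 2 - 1) * f = (X ^ 2 - 1) * g₁ + (X * (X ^ 2 - 1)) * g₂ := by
  set fc := f.comp (-X) with hfc
  have hC2 : (C (2⁻¹ : K)) * (2 : K[X]) = 1 := by
    rw [show (2 : K[X]) = C 2 by
      rw [show (2:K) = 1 + 1 by norm_num, map_add, map_one]; norm_num]
    rw [← map_mul, inv_mul_cancel₀ h2, map_one]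
  set g₁ := (f + fc) * C (2⁻¹ : K) with hg₁
  set O := (f - fc) * C (2⁻¹ : K) with hO
  have hXdvd : X ∣ O := by
    rw [Polynomial.X_dvd_iff]
    rw [hO, mul_comm, coeff_C_mul, hfc]
    rw [coeff_sub, coeff_zero_eq_eval_zero, coeff_zero_eq_eval_zero, eval_comp]
    simp
  obtain ⟨h, hOh⟩ := hXdvd
  have hfsum : g₁ + O = f := by
    rw [hg₁, hO]
    have : (f + fc) * C (2⁻¹ : K) + (f - fc) * C (2⁻¹ : K) = f * (C (2⁻¹ : K) * 2) := by ring
    rw [this, hC2, mul_one]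
  have hfc1 : fc.eval 1 = f.eval (-1) := by rw [hfc, eval_comp]; norm_num
  have hfc2 : fc.eval (-1) = f.eval 1 := by rw [hfc, eval_comp]; norm_num
  refine ⟨g₁, h, ?_, ?_, ?_⟩
  · rw [hg₁]
    simp only [eval_mul, eval_add, eval_C, hfc1, hfc2]
    ring
  · have hO1 : O.eval 1 = h.eval 1 := by rw [hOh]; simp
    have hO2 : O.eval (-1) = -h.eval (-1) := by rw [hOh]; simp
    have hOskew : O.eval (-1) = -O.eval 1 := by
      rw [hO]
      simp only [eval_mul, eval_sub, eval_C, hfc1, hfc2]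
      ring
    linear_combination -hO1 - hO2 + hOskew
  · rw [← hfsum, hOh]
    ring

lemma cond_mem (h2 : (2 : K) ≠ 0) (w : NodalCubicRing K) (g : K[X])
    (hw : nodalφ K w = (X ^ 2 - 1) * g) :
    w ∈ Ideal.span {nodalX K, nodalY K} := by
  obtain ⟨g₁, g₂, he1, he2, hdec⟩ := even_odd_decomp K h2 g
  obtain ⟨s₁, hs₁⟩ := mem_range_of_eval K h2 g₁.natDegree g₁ le_rfl he1
  obtain ⟨s₂, hs₂⟩ := mem_range_of_eval K h2 g₂.natDegree g₂ le_rfl he2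
  have hs₁' : nodalφ K s₁ = g₁ := hs₁
  have hs₂' : nodalφ K s₂ = g₂ := hs₂
  have : nodalφ K w = nodalφ K (nodalX K * s₁ + nodalY K * s₂) := by
    rw [map_add, map_mul, map_mul, nodalφ_x, nodalφ_y, hs₁', hs₂', hw, hdec]
  have hweq : w = nodalX K * s₁ + nodalY K * s₂ := nodalφ_inj K h2 this
  rw [hweq]
  exact Ideal.add_mem _
    (Ideal.mul_mem_right s₁ _ (Ideal.subset_span (Set.mem_insert _ _)))
    (Ideal.mul_mem_right s₂ _ (Ideal.subset_span (Set.mem_insert_of_mem _ rfl)))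


/-- Let `char K ≠ 2` and `R = K[x,y]/(y² - x²(x+1))`.  The assignment
`x ↦ z² - 1`, `y ↦ z(z² - 1)` induces an injective `K`-algebra homomorphism from `R`
onto the subring `K[z² - 1, z(z² - 1)]` of `K[z]`; and for every nonzero non-invertible
ideal `I` of `R` (with generating pair `(a, b)`), `Fitt₁(I)` is the conductor
`K[z](z² - 1)` viewed in `R`, namely the ideal generated by the images of `x` and `y`. -/
theorem nodal_cubic_fitting (K : Type) [Field K] (h2 : (2 : K) ≠ 0) :
    (∃ φ : NodalCubicRing K →ₐ[K] Polynomial K,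
      Function.Injective φ ∧
      φ (nodalX K) = Polynomial.X ^ 2 - 1 ∧
      φ (nodalY K) = Polynomial.X * (Polynomial.X ^ 2 - 1) ∧
      φ.range = Algebra.adjoin K
        {(Polynomial.X : Polynomial K) ^ 2 - 1,
          Polynomial.X * (Polynomial.X ^ 2 - 1)}) ∧
    (∀ (I : Ideal (NodalCubicRing K)) (a b : NodalCubicRing K),
      I = Ideal.span {a, b} → I ≠ ⊥ →
      ¬ (Submodule.map (Algebra.linearMap (NodalCubicRing K)
            (FractionRing (NodalCubicRing K))) I *
          ((1 : Submodule (NodalCubicRing K) (FractionRing (NodalCubicRing K))) /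
            Submodule.map (Algebra.linearMap (NodalCubicRing K)
              (FractionRing (NodalCubicRing K))) I) = 1) →
      relFittingIdeal a b = Ideal.span {nodalX K, nodalY K}) := by
  classical
  have hinj := nodalφ_inj K h2
  refine ⟨⟨nodalφ K, hinj, nodalφ_x K, nodalφ_y K, nodalφ_range K⟩, ?_⟩
  intro I a b hI hbot hninv
  haveI : IsDomain (NodalCubicRing K) :=
    Function.Injective.isDomain (nodalφ K).toRingHom hinj
  -- basic setup in K[X]
  set A := nodalφ K a with hAdef
  set B := nodalφ K b with hBdef
  have hab : ¬(a = 0 ∧ b = 0) := by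
    rintro ⟨rfl, rfl⟩
    apply hbot
    rw [hI]
    simp
  set D := EuclideanDomain.gcd A B with hDdef
  have hD0 : D ≠ 0 := by
    rw [hDdef, Ne, EuclideanDomain.gcd_eq_zero_iff]
    rintro ⟨hA0, hB0⟩
    exact hab ⟨hinj (show nodalφ K a = nodalφ K 0 by rw [map_zero, ← hAdef]; exact hA0),
      hinj (show nodalφ K b = nodalφ K 0 by rw [map_zero, ← hBdef]; exact hB0)⟩
  obtain ⟨A', hA⟩ : D ∣ A := EuclideanDomain.gcd_dvd_left A B
  obtain ⟨B', hB⟩ : D ∣ B := EuclideanDomain.gcd_dvd_right A B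
  obtain ⟨U, V, hUV⟩ : ∃ U V : K[X], U * A' + V * B' = 1 := by
    have hbez := EuclideanDomain.gcd_eq_gcd_ab A B
    refine ⟨EuclideanDomain.gcdA A B, EuclideanDomain.gcdB A B, ?_⟩
    apply mul_left_cancel₀ hD0
    rw [mul_one]
    calc D * (EuclideanDomain.gcdA A B * A' + EuclideanDomain.gcdB A B * B')
        = A * EuclideanDomain.gcdA A B + B * EuclideanDomain.gcdB A B := by
          rw [hA, hB]; ring
      _ = D := hbez.symm
  have hcop : IsCoprime A' B' := ⟨U, V, hUV⟩
  set α₁ := A'.eval 1 with hα₁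
  set α₂ := A'.eval (-1) with hα₂
  set β₁ := B'.eval 1 with hβ₁
  set β₂ := B'.eval (-1) with hβ₂
  set u₁ := U.eval 1 with hu₁
  set u₂ := U.eval (-1) with hu₂
  set v₁ := V.eval 1 with hv₁
  set v₂ := V.eval (-1) with hv₂
  have hbz1 : u₁ * α₁ + v₁ * β₁ = 1 := by
    have := congrArg (Polynomial.eval 1) hUV
    simpa [eval_add, eval_mul] using this
  have hbz2 : u₂ * α₂ + v₂ * β₂ = 1 := by
    have := congrArg (Polynomial.eval (-1)) hUV
    simpa [eval_add, eval_mul] using this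
  by_cases hΔ : α₁ * β₂ - α₂ * β₁ = 0
  · -- the ideal is invertible: contradiction
    exfalso
    -- find the proportionality factor l with (α₂, β₂) = l • (α₁, β₁)
    obtain ⟨l, hvα, hvβ⟩ : ∃ l : K, α₂ = l * α₁ ∧ β₂ = l * β₁ := by
      by_cases hα : α₁ ≠ 0
      · refine ⟨α₂ / α₁, by field_simp, ?_⟩
        field_simp
        linear_combination hΔ
      · push_neg at hα
        have hβ : β₁ ≠ 0 := by
          intro h
          rw [hα, h] at hbz1
          simp at hbz1
        refine ⟨β₂ / β₁, ?_, by field_simp⟩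
        rw [hα, mul_zero]
        have : α₂ * β₁ = 0 := by
          rw [hα] at hΔ
          linear_combination -hΔ
        rcases mul_eq_zero.mp this with h | h
        · exact h
        · exact absurd h hβ
    have hbz2' : u₂ * (l * α₁) + v₂ * (l * β₁) = 1 := by
      rw [← hvα, ← hvβ]; exact hbz2
    have compat : α₁ * (l * u₂ - u₁) = β₁ * (v₁ - l * v₂) := by
      linear_combination hbz2' - hbz1
    obtain ⟨w₁, hw1a, hw1b⟩ :
        ∃ w₁ : K, w₁ * β₁ = l * u₂ - u₁ ∧ w₁ * α₁ = v₁ - l * v₂ := by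
      by_cases hβ : β₁ ≠ 0
      · refine ⟨(l * u₂ - u₁) / β₁, by field_simp, ?_⟩
        field_simp
        linear_combination compat
      · push_neg at hβ
        have hα : α₁ ≠ 0 := by
          intro h
          rw [hβ, h] at hbz1
          simp at hbz1
        refine ⟨(v₁ - l * v₂) / α₁, ?_, by field_simp⟩
        rw [hβ, mul_zero]
        have : α₁ * (l * u₂ - u₁) = 0 := by
          rw [hβ] at compat
          linear_combination compat
        rcases mul_eq_zero.mp this with h | h
        · exact absurd h hα
        · linear_combination -h
    set W : K[X] := C w₁ * (X + 1) * C (2⁻¹ : K) with hWdef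
    have hW1 : W.eval 1 = w₁ := by
      rw [hWdef]
      simp only [eval_mul, eval_add, eval_C, eval_X, eval_one]
      field_simp
      ring
    have hW2 : W.eval (-1) = 0 := by
      rw [hWdef]
      simp only [eval_mul, eval_add, eval_C, eval_X, eval_one]
      ring
    set P : K[X] := U + W * B' with hPdef
    set Q : K[X] := V - W * A' with hQdef
    have hPQ : P * A' + Q * B' = 1 := by
      rw [hPdef, hQdef]
      linear_combination hUV
    have hP1 : P.eval 1 = u₁ + w₁ * β₁ := by
      rw [hPdef]; simp only [eval_add, eval_mul, hW1]; rfl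
    have hP2 : P.eval (-1) = u₂ := by
      rw [hPdef]; simp only [eval_add, eval_mul, hW2]; ring
    have hQ1 : Q.eval 1 = v₁ - w₁ * α₁ := by
      rw [hQdef]; simp only [eval_sub, eval_mul, hW1]; rfl
    have hQ2 : Q.eval (-1) = v₂ := by
      rw [hQdef]; simp only [eval_sub, eval_mul, hW2]; ring
    -- the four products lie in the subring
    have hPAe : (P * A').eval 1 = (P * A').eval (-1) := by
      simp only [eval_mul, hP1, hP2]
      linear_combination α₁ * hw1a - u₂ * hvα
    have hPBe : (P * B').eval 1 = (P * B').eval (-1) := by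
      simp only [eval_mul, hP1, hP2]
      linear_combination β₁ * hw1a - u₂ * hvβ
    have hQAe : (Q * A').eval 1 = (Q * A').eval (-1) := by
      simp only [eval_mul, hQ1, hQ2]
      linear_combination -α₁ * hw1b - v₂ * hvα
    have hQBe : (Q * B').eval 1 = (Q * B').eval (-1) := by
      simp only [eval_mul, hQ1, hQ2]
      linear_combination -β₁ * hw1b - v₂ * hvβ
    obtain ⟨w₁R, hw₁R⟩ := mem_range_of_eval K h2 _ _ le_rfl hPAe
    obtain ⟨w₂R, hw₂R⟩ := mem_range_of_eval K h2 _ _ le_rfl hPBe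
    obtain ⟨w₃R, hw₃R⟩ := mem_range_of_eval K h2 _ _ le_rfl hQAe
    obtain ⟨w₄R, hw₄R⟩ := mem_range_of_eval K h2 _ _ le_rfl hQBe
    have hw₁R' : nodalφ K w₁R = P * A' := hw₁R
    have hw₂R' : nodalφ K w₂R = P * B' := hw₂R
    have hw₃R' : nodalφ K w₃R = Q * A' := hw₃R
    have hw₄R' : nodalφ K w₄R = Q * B' := hw₄R
    have hX2ev : ∀ p : K[X], (p * (X ^ 2 - 1)).eval 1 = (p * (X ^ 2 - 1)).eval (-1) := by
      intro p
      simp [eval_mul]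
    obtain ⟨n₁, hn₁⟩ := mem_range_of_eval K h2 _ _ le_rfl (hX2ev (P * D))
    obtain ⟨n₂, hn₂⟩ := mem_range_of_eval K h2 _ _ le_rfl (hX2ev (Q * D))
    obtain ⟨m₀, hm₀⟩ := mem_range_of_eval K h2 _ _ le_rfl (hX2ev (D * D))
    have hn₁' : nodalφ K n₁ = P * D * (X ^ 2 - 1) := hn₁
    have hn₂' : nodalφ K n₂ = Q * D * (X ^ 2 - 1) := hn₂
    have hm₀' : nodalφ K m₀ = D * D * (X ^ 2 - 1) := hm₀
    have hm₀0 : m₀ ≠ 0 := by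
      intro h
      rw [h, map_zero] at hm₀'
      exact (mul_ne_zero (mul_ne_zero hD0 hD0) (X2_monic K).ne_zero) hm₀'.symm
    -- the ring identities
    have k₁ : n₁ * a = m₀ * w₁R := by
      apply hinj
      rw [map_mul, map_mul, hn₁', hm₀', hw₁R', ← hAdef, hA]
      ring
    have k₂ : n₁ * b = m₀ * w₂R := by
      apply hinj
      rw [map_mul, map_mul, hn₁', hm₀', hw₂R', ← hBdef, hB]
      ring
    have k₃ : n₂ * a = m₀ * w₃R := by
      apply hinj
      rw [map_mul, map_mul, hn₂', hm₀', hw₃R', ← hAdef, hA]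
      ring
    have k₄ : n₂ * b = m₀ * w₄R := by
      apply hinj
      rw [map_mul, map_mul, hn₂', hm₀', hw₄R', ← hBdef, hB]
      ring
    have ksum : w₁R + w₄R = 1 := by
      apply hinj
      rw [map_add, map_one, hw₁R', hw₄R', hPQ]
    -- now work in the fraction field
    set F := FractionRing (NodalCubicRing K) with hF
    set ι := algebraMap (NodalCubicRing K) F with hι
    have hιinj : Function.Injective ι := IsFractionRing.injective _ _
    have hιm₀ : ι m₀ ≠ 0 := fun h =>
      hm₀0 (hιinj (by rw [h, map_zero]))
    set J := Submodule.map (Algebra.linearMap (NodalCubicRing K) F) I with hJ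
    set h₁ : F := ι n₁ * (ι m₀)⁻¹ with hh₁
    set h₂ : F := ι n₂ * (ι m₀)⁻¹ with hh₂
    have fact : ∀ (n w c : NodalCubicRing K), n * c = m₀ * w →
        (ι n * (ι m₀)⁻¹) * ι c = ι w := by
      intro n w c hk
      have hmap : ι n * ι c = ι m₀ * ι w := by
        rw [← map_mul, ← map_mul, hk]
      rw [mul_right_comm, mul_inv_eq_iff_eq_mul₀ hιm₀]
      linear_combination hmap
    have fact₁ := fact n₁ w₁R a k₁
    have fact₂ := fact n₁ w₂R b k₂
    have fact₃ := fact n₂ w₃R a k₃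
    have fact₄ := fact n₂ w₄R b k₄
    have hmemdiv : ∀ (n : NodalCubicRing K) (wa wb : NodalCubicRing K),
        (ι n * (ι m₀)⁻¹) * ι a = ι wa → (ι n * (ι m₀)⁻¹) * ι b = ι wb →
        (ι n * (ι m₀)⁻¹) ∈ (1 : Submodule (NodalCubicRing K) F) / J := by
      intro n wa wb hfa hfb
      rw [Submodule.mem_div_iff_forall_mul_mem]
      intro y hy
      rw [hJ] at hy
      obtain ⟨w, hwI, rfl⟩ := hy
      rw [hI] at hwI
      obtain ⟨r, s, rfl⟩ := Ideal.mem_span_pair.mp hwI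
      rw [Submodule.mem_one]
      refine ⟨r * wa + s * wb, ?_⟩
      have : Algebra.linearMap (NodalCubicRing K) F (r * a + s * b)
          = ι (r * a + s * b) := rfl
      rw [this, map_add, map_mul, map_mul, map_add, map_mul, map_mul]
      simp only [hι] at hfa hfb ⊢
      linear_combination -(algebraMap (NodalCubicRing K) F r) * hfa -
        (algebraMap (NodalCubicRing K) F s) * hfb
    have hmem₁ : (ι n₁ * (ι m₀)⁻¹) ∈ (1 : Submodule (NodalCubicRing K) F) / J :=
      hmemdiv n₁ w₁R w₂R fact₁ fact₂
    have hmem₂ : (ι n₂ * (ι m₀)⁻¹) ∈ (1 : Submodule (NodalCubicRing K) F) / J :=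
      hmemdiv n₂ w₃R w₄R fact₃ fact₄
    have hamem : ι a ∈ J := by
      rw [hJ]
      exact Submodule.mem_map_of_mem (by rw [hI]; exact Ideal.subset_span (Set.mem_insert _ _))
    have hbmem : ι b ∈ J := by
      rw [hJ]
      exact Submodule.mem_map_of_mem
        (by rw [hI]; exact Ideal.subset_span (Set.mem_insert_of_mem _ rfl))
    have hw14 : ι w₁R + ι w₄R = 1 := by
      rw [← map_add, ksum, map_one]
    have hone : (1 : F) = ι a * (ι n₁ * (ι m₀)⁻¹) + ι b * (ι n₂ * (ι m₀)⁻¹) := by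
      linear_combination -fact₁ - fact₄ - hw14
    apply hninv
    apply le_antisymm Submodule.mul_one_div_le_one
    rw [Submodule.one_le, hone]
    exact Submodule.add_mem _ (Submodule.mul_mem_mul hamem hmem₁)
      (Submodule.mul_mem_mul hbmem hmem₂)
  · -- the Fitting ideal equals the conductor
    have hA'0 : A' ≠ 0 := by
      intro h
      apply hΔ
      rw [hα₁, hα₂, h]
      simp
    have hB'0 : B' ≠ 0 := by
      intro h
      apply hΔ
      rw [hβ₁, hβ₂, h]
      simp
    have hpre : ∀ g : K[X], g.eval 1 = 0 → g.eval (-1) = 0 →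
        ∃ w : NodalCubicRing K, nodalφ K w = g := by
      intro g hg1 hg2
      obtain ⟨w, hw⟩ := mem_range_of_eval K h2 g.natDegree g le_rfl (by rw [hg1, hg2])
      exact ⟨w, hw⟩
    apply le_antisymm
    · -- relFitt ⊆ (x, y)
      rw [relFittingIdeal, Ideal.span_le]
      intro r hr
      simp only [Set.mem_setOf_eq] at hr
      have hcancel : ∀ p q : NodalCubicRing K, nodalφ K p * A + nodalφ K q * B = 0 →
          nodalφ K p * A' + nodalφ K q * B' = 0 := by
        intro p q happ
        have hD : D * (nodalφ K p * A' + nodalφ K q * B') = 0 := by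
          rw [hA, hB] at happ
          linear_combination happ
        exact (mul_eq_zero.mp hD).resolve_left hD0
      have key : ∀ t : K[X], t.eval 1 * α₁ = t.eval (-1) * α₂ →
          t.eval 1 * β₁ = t.eval (-1) * β₂ →
          t.eval 1 = 0 ∧ t.eval (-1) = 0 := by
        intro t e2 e1
        constructor
        · refine (mul_eq_zero.mp (show t.eval 1 * (α₁ * β₂ - α₂ * β₁) = 0 from ?_)).resolve_right hΔ
          linear_combination β₂ * e2 - α₂ * e1
        · refine (mul_eq_zero.mp (show t.eval (-1) * (α₁ * β₂ - α₂ * β₁) = 0 from ?_)).resolve_right hΔ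
          linear_combination β₁ * e2 - α₁ * e1
      have hcopX : IsCoprime (X - C (1:K)) (X - C (-1:K)) := by
        refine ⟨-(C (2⁻¹:K)), C (2⁻¹:K), ?_⟩
        have hexp : -(C (2⁻¹:K)) * (X - C 1) + C (2⁻¹:K) * (X - C (-1))
            = C (2⁻¹:K) * (C (1:K) - C (-1:K)) := by ring
        rw [hexp, ← map_sub]
        norm_num
        rw [← map_mul, inv_mul_cancel₀ h2, map_one]
      have hfac : (X - C (1:K)) * (X - C (-1:K)) = X ^ 2 - 1 := by
        simp only [map_one, map_neg]
        ring
      have finish : ∀ (t : K[X]), t.eval 1 = 0 → t.eval (-1) = 0 →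
          ∀ (g : K[X]) (w : NodalCubicRing K), nodalφ K w = g * t →
          w ∈ Ideal.span {nodalX K, nodalY K} := by
        intro t ht1 ht2 g w hw
        have hdvd1 : (X - C (1:K)) ∣ t := dvd_iff_isRoot.mpr ht1
        have hdvd2 : (X - C (-1:K)) ∣ t := dvd_iff_isRoot.mpr ht2
        obtain ⟨t', ht'⟩ := hcopX.mul_dvd hdvd1 hdvd2
        exact cond_mem K h2 w (g * t') (by rw [hw, ht', ← hfac]; ring)
      rcases hr with ⟨s, hs⟩ | ⟨s, hs⟩
      · have happ : nodalφ K r * A + nodalφ K s * B = 0 := by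
          have := congrArg (nodalφ K) hs
          rw [map_add, map_mul, map_mul, map_zero] at this
          rw [hAdef, hBdef]
          exact this
        have hrel := hcancel r s happ
        have hdvd : B' ∣ nodalφ K r :=
          hcop.symm.dvd_of_dvd_mul_right ⟨-(nodalφ K s), by linear_combination hrel⟩
        obtain ⟨t, ht⟩ := hdvd
        have hsA : nodalφ K s = -(t * A') := by
          apply mul_left_cancel₀ hB'0
          linear_combination hrel - A' * ht
        have e1m : (B' * t).eval 1 = (B' * t).eval (-1) := by
          rw [← ht]
          exact eval_eq_of_mem_range K (nodalφ K r) ⟨r, rfl⟩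
        have e2m : (t * A').eval 1 = (t * A').eval (-1) := by
          have hh := eval_eq_of_mem_range K (nodalφ K s) ⟨s, rfl⟩
          rw [hsA] at hh
          simpa [eval_neg] using hh
        have e2'' : t.eval 1 * α₁ = t.eval (-1) * α₂ := by
          rw [hα₁, hα₂]
          simpa [eval_mul] using e2m
        have e1'' : t.eval 1 * β₁ = t.eval (-1) * β₂ := by
          rw [hβ₁, hβ₂]
          have := e1m
          simp only [eval_mul] at this
          linear_combination this
        obtain ⟨ht1, ht2⟩ := key t e2'' e1''
        exact finish t ht1 ht2 B' r ht
      · have happ : nodalφ K s * A + nodalφ K r * B = 0 := by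
          have := congrArg (nodalφ K) hs
          rw [map_add, map_mul, map_mul, map_zero] at this
          rw [hAdef, hBdef]
          exact this
        have hrel := hcancel s r happ
        have hdvd : A' ∣ nodalφ K r :=
          hcop.dvd_of_dvd_mul_right ⟨-(nodalφ K s), by linear_combination hrel⟩
        obtain ⟨t, ht⟩ := hdvd
        have hsB : nodalφ K s = -(t * B') := by
          apply mul_left_cancel₀ hA'0
          linear_combination hrel - B' * ht
        have e1m : (A' * t).eval 1 = (A' * t).eval (-1) := by
          rw [← ht]
          exact eval_eq_of_mem_range K (nodalφ K r) ⟨r, rfl⟩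
        have e2m : (t * B').eval 1 = (t * B').eval (-1) := by
          have hh := eval_eq_of_mem_range K (nodalφ K s) ⟨s, rfl⟩
          rw [hsB] at hh
          simpa [eval_neg] using hh
        have e2'' : t.eval 1 * β₁ = t.eval (-1) * β₂ := by
          rw [hβ₁, hβ₂]
          simpa [eval_mul] using e2m
        have e1'' : t.eval 1 * α₁ = t.eval (-1) * α₂ := by
          rw [hα₁, hα₂]
          have := e1m
          simp only [eval_mul] at this
          linear_combination this
        obtain ⟨ht1, ht2⟩ := key t e1'' e2''
        exact finish t ht1 ht2 A' r ht
    · -- (x, y) ⊆ relFitt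
      have main : ∀ (cp : K[X]) (w : NodalCubicRing K), nodalφ K w = cp →
          cp.eval 1 = 0 → cp.eval (-1) = 0 → w ∈ relFittingIdeal a b := by
        intro cp w hw h1 h0
        obtain ⟨e₁, he₁⟩ := hpre (cp * V * B') (by simp [h1]) (by simp [h0])
        obtain ⟨e₂, he₂⟩ := hpre (cp * U * A') (by simp [h1]) (by simp [h0])
        obtain ⟨s₁, hs₁⟩ := hpre (-(cp * V * A')) (by simp [h1]) (by simp [h0])
        obtain ⟨s₂, hs₂⟩ := hpre (-(cp * U * B')) (by simp [h1]) (by simp [h0])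
        have hw_eq : w = e₁ + e₂ := by
          apply hinj
          rw [map_add, he₁, he₂, hw]
          linear_combination -cp * hUV
        rw [hw_eq]
        apply Ideal.add_mem
        · apply Ideal.subset_span
          left
          refine ⟨s₁, ?_⟩
          apply hinj
          rw [map_add, map_mul, map_mul, map_zero, he₁, hs₁, ← hAdef, ← hBdef, hA, hB]
          ring
        · apply Ideal.subset_span
          right
          refine ⟨s₂, ?_⟩
          apply hinj
          rw [map_add, map_mul, map_mul, map_zero, he₂, hs₂, ← hAdef, ← hBdef, hA, hB]
          ring
      rw [Ideal.span_le]
      rintro c (rfl | rfl)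
      · exact main (X ^ 2 - 1) (nodalX K) (nodalφ_x K) (by simp) (by simp)
      · exact main (X * (X ^ 2 - 1)) (nodalY K) (nodalφ_y K) (by simp) (by simp)
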